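/- arXiv:1003.2195 — 2 statements merged into one kernel-verified Lean document; each statement's English description precedes it below -/
import Mathlib

section
/- With R_j as above, the product R_j R_m has a pole of order at most 2 and residue zero at each point z_l, and consequently ∮_{γ_k} R_j(z) R_m(z) dz = 0 for all j, k, m ∈ {1,…,n−1}. -/
open Complex

open Polynomial in
lemma poly_antideriv (p : ℂ[X]) : ∃ q : ℂ[X], q.derivative = p := by
  induction p using Polynomial.induction_on' with
  | add p q hp hq =>
    obtain ⟨P, hP⟩ := hp; obtain ⟨Q, hQ⟩ := hq
    exact ⟨P + Q, by simp [hP, hQ]⟩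
  | monomial n a =>
    refine ⟨monomial (n+1) (a / (n+1)), ?_⟩
    rw [Polynomial.derivative_monomial]
    have h : ((n:ℂ)+1) ≠ 0 := Nat.cast_add_one_ne_zero n
    simp only [Nat.add_sub_cancel]
    rw [div_mul_eq_mul_div]
    push_cast
    rw [mul_div_assoc, div_self h, mul_one]

open Polynomial in
lemma key_exists (c2 : ℂ) (hc2 : c2 ≠ 0) (a b : ℂ) (qj qm : Polynomial ℂ)
    (hqm : a ≠ b → qm.eval a = -(1/(c2*(a-b)^2)))
    (hqj : a ≠ b → qj.eval b = -(1/(c2*(b-a)^2))) :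
    ∃ F : ℂ → ℂ, ∀ w, w ≠ a → w ≠ b → HasDerivAt F
      ((1/(c2*(w-a)) + (w-a)*qj.eval w) * (1/(c2*(w-b)) + (w-b)*qm.eval w)) w := by
  by_cases hab : a = b
  · -- diagonal case: double pole, residue zero
    subst hab
    obtain ⟨P₁, hP₁⟩ := poly_antideriv (C c2⁻¹ * (qj + qm) + (X - C a)^2 * qj * qm)
    refine ⟨fun w => -(c2^2*(w-a))⁻¹ + P₁.eval w, fun w hwa _ => ?_⟩
    have hwa' : w - a ≠ 0 := sub_ne_zero.2 hwa
    have h1 : HasDerivAt (fun w : ℂ => c2^2*(w-a)) (c2^2*1) w :=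
      ((hasDerivAt_id w).sub_const a).const_mul _
    have h2 := ((h1.inv (mul_ne_zero (pow_ne_zero 2 hc2) hwa')).neg).add (P₁.hasDerivAt w)
    convert h2 using 1 <;> try rfl
    rw [hP₁]
    simp only [eval_add, eval_mul, eval_pow, eval_sub, eval_X, eval_C]
    field_simp
    ring
  · -- off-diagonal case: product extends to a polynomial
    have hab' : a - b ≠ 0 := sub_ne_zero.2 hab
    have hba' : b - a ≠ 0 := sub_ne_zero.2 (Ne.symm hab)
    obtain ⟨S, hS⟩ := Polynomial.X_sub_C_dvd_sub_C_eval (a := a) (p := (X - C b) * qm)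
    obtain ⟨T, hT⟩ := Polynomial.X_sub_C_dvd_sub_C_eval (a := b) (p := (X - C a) * qj)
    obtain ⟨P₁, hP₁⟩ := poly_antideriv (C c2⁻¹ * (S + T) + (X - C a) * (X - C b) * qj * qm)
    refine ⟨fun w => P₁.eval w, fun w hwa hwb => ?_⟩
    have hwa' : w - a ≠ 0 := sub_ne_zero.2 hwa
    have hwb' : w - b ≠ 0 := sub_ne_zero.2 hwb
    have hSw : (w-b)*qm.eval w - (a-b)*(-(1/(c2*(a-b)^2))) = (w-a)*(S.eval w) := by
      have := congrArg (Polynomial.eval w) hS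
      simp only [eval_sub, eval_mul, eval_X, eval_C] at this
      rw [← hqm hab]
      linear_combination this
    have hTw : (w-a)*qj.eval w - (b-a)*(-(1/(c2*(b-a)^2))) = (w-b)*(T.eval w) := by
      have := congrArg (Polynomial.eval w) hT
      simp only [eval_sub, eval_mul, eval_X, eval_C] at this
      rw [← hqj hab]
      linear_combination this
    convert P₁.hasDerivAt w using 1 <;> try rfl
    rw [hP₁]
    simp only [eval_add, eval_mul, eval_sub, eval_X, eval_C]
    set Qj := qj.eval w
    set Qm := qm.eval w
    set Sw := S.eval w
    set Tw := T.eval w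
    have hS2 : c2*(a-b)*((w-b)*Qm) + 1 = c2*(a-b)*((w-a)*Sw) := by
      have h := congrArg (fun x => c2*(a-b)*x) hSw
      try simp only at h
      rw [← h]; field_simp; ring
    have hT2 : c2*(b-a)*((w-a)*Qj) + 1 = c2*(b-a)*((w-b)*Tw) := by
      have h := congrArg (fun x => c2*(b-a)*x) hTw
      try simp only at h
      rw [← h]; field_simp; ring
    have hM : (c2^2*(a-b)*(w-a)*(w-b)) ≠ 0 :=
      mul_ne_zero (mul_ne_zero (mul_ne_zero (pow_ne_zero 2 hc2) hab') hwa') hwb'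
    apply mul_left_cancel₀ hM
    have e1 : c2^2*(a-b)*(w-a)*(w-b) * ((1/(c2*(w-a)) + (w-a)*Qj)*(1/(c2*(w-b)) + (w-b)*Qm))
        = (a-b) + c2*(a-b)*(w-b)^2*Qm + c2*(a-b)*(w-a)^2*Qj
          + c2^2*(a-b)*(w-a)*(w-b)*((w-a)*(w-b)*Qj*Qm) := by
      field_simp; ring
    have e2 : c2^2*(a-b)*(w-a)*(w-b) * (c2⁻¹*(Sw+Tw) + (w-a)*(w-b)*Qj*Qm)
        = c2*(a-b)*(w-a)*(w-b)*(Sw+Tw) + c2^2*(a-b)*(w-a)*(w-b)*((w-a)*(w-b)*Qj*Qm) := by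
      field_simp; try ring
    rw [e1]
    calc (a-b) + c2*(a-b)*(w-b)^2*Qm + c2*(a-b)*(w-a)^2*Qj
          + c2^2*(a-b)*(w-a)*(w-b)*((w-a)*(w-b)*Qj*Qm)
        = c2*(a-b)*(w-a)*(w-b)*(Sw+Tw) + c2^2*(a-b)*(w-a)*(w-b)*((w-a)*(w-b)*Qj*Qm) := by
          linear_combination (w-b)*hS2 - (w-a)*hT2
      _ = _ := e2.symm

lemma closed_curve_integral_zero (F f : ℂ → ℂ) (γ γ' : ℝ → ℂ)
    (hγd : ∀ t, HasDerivAt γ (γ' t) t) (hclosed : γ 0 = γ 1)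
    (hF : ∀ t : ℝ, HasDerivAt F (f (γ t)) (γ t))
    (hcont : Continuous fun t => f (γ t) * γ' t) :
    ∫ t in (0:ℝ)..1, f (γ t) * γ' t = 0 := by
  have h : ∀ t ∈ Set.uIcc (0:ℝ) 1, HasDerivAt (F ∘ γ) (f (γ t) * γ' t) t := by
    intro t _
    exact (hF t).comp t (hγd t)
  rw [intervalIntegral.integral_eq_sub_of_hasDerivAt h (hcont.intervalIntegrable _ _)]
  simp [hclosed]

lemma circle_integral_zero (F f : ℂ → ℂ) (c : ℂ) (r : ℝ)
    (hF : ∀ θ : ℝ, HasDerivAt F (f (circleMap c r θ)) (circleMap c r θ))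
    (hcont : Continuous fun θ => f (circleMap c r θ)) :
    (∮ w in C(c, r), f w) = 0 := by
  have key : ∫ θ in (0:ℝ)..(2*Real.pi), f (circleMap c r θ) * (circleMap 0 r θ * I) = 0 := by
    have h : ∀ θ ∈ Set.uIcc (0:ℝ) (2*Real.pi),
        HasDerivAt (F ∘ circleMap c r) (f (circleMap c r θ) * (circleMap 0 r θ * I)) θ := by
      intro θ _
      exact (hF θ).comp θ (hasDerivAt_circleMap c r θ)
    have hc : Continuous fun θ => f (circleMap c r θ) * (circleMap 0 r θ * I) :=
      hcont.mul ((continuous_circleMap 0 r).mul continuous_const)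
    rw [intervalIntegral.integral_eq_sub_of_hasDerivAt h (hc.intervalIntegrable _ _)]
    have : circleMap c r (2*Real.pi) = circleMap c r 0 := by simpa using (periodic_circleMap c r) 0
    simp [Function.comp_def, this]
  rw [circleIntegral]
  rw [← key]
  refine intervalIntegral.integral_congr fun θ _ => ?_
  simp [deriv_circleMap, smul_eq_mul]; ring

/-- The product `R_j R_m` has residue zero at each point `z_l` (expressed via small circle
integrals around `z_l` vanishing), and consequently `∮_{γ_k} R_j R_m dz = 0` for all
`j, k, m`. -/
theorem contour_integral_RjRm
    {n : ℕ} (z : Fin n → ℂ) (hz : Function.Injective z)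
    (γ γ' : Fin n → ℝ → ℂ)
    (hγd : ∀ k t, HasDerivAt (γ k) (γ' k t) t)
    (hγc : ∀ k, Continuous (γ' k))
    (hclosed : ∀ k, γ k 0 = γ k 1)
    (havoid : ∀ k t l, γ k t ≠ z l)
    (hwind : ∀ k l, ∫ t in (0:ℝ)..1, γ' k t / (γ k t - z l)
      = if k = l then 2 * Real.pi * Complex.I else 0)
    (Q : Fin n → Polynomial ℂ)
    (hQ : ∀ j k, j ≠ k →
      (Q j).eval (z k) = -(1 / (2 * Real.pi * Complex.I * (z k - z j) ^ 2)))
    (R : Fin n → ℂ → ℂ)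
    (hR : ∀ j w, R j w = 1 / (2 * Real.pi * Complex.I * (w - z j))
      + (w - z j) * (Q j).eval w)
    (j k m : Fin n) :
    (∀ l : Fin n, ∃ r₀ > (0:ℝ), ∀ r : ℝ, 0 < r → r < r₀ →
        (∮ w in C(z l, r), R j w * R m w) = 0) ∧
    ∫ t in (0:ℝ)..1, R j (γ k t) * R m (γ k t) * γ' k t = 0 := by
  set c2 : ℂ := 2 * Real.pi * Complex.I with hc2def
  have hc2 : c2 ≠ 0 := Complex.two_pi_I_ne_zero
  set a := z j
  set b := z m
  -- the derivative / primitive data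
  obtain ⟨F, hF⟩ := key_exists c2 hc2 a b (Q j) (Q m)
    (fun hab => hQ m j (fun h => hab (show z j = z m by rw [h])))
    (fun hab => hQ j m (fun h => hab (show z j = z m by rw [h])))
  have hfeq : ∀ w : ℂ, R j w * R m w
      = (1/(c2*(w-a)) + (w-a)*(Q j).eval w) * (1/(c2*(w-b)) + (w-b)*(Q m).eval w) := by
    intro w; rw [hR, hR]
  have hF' : ∀ w : ℂ, w ≠ a → w ≠ b → HasDerivAt F (R j w * R m w) w := by
    intro w hwa hwb
    rw [hfeq w]
    exact hF w hwa hwb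
  have hfc : ∀ w : ℂ, w ≠ a → w ≠ b → ContinuousAt (fun w => R j w * R m w) w := by
    intro w hwa hwb
    have heq : (fun w => R j w * R m w)
        = fun w => (1/(c2*(w-a)) + (w-a)*(Q j).eval w) * (1/(c2*(w-b)) + (w-b)*(Q m).eval w) :=
      funext hfeq
    rw [heq]
    have hca : ContinuousAt (fun w : ℂ => 1/(c2*(w-a)) + (w-a)*(Q j).eval w) w := by
      apply ContinuousAt.add
      · exact continuousAt_const.div
          ((continuous_const.mul (continuous_id.sub continuous_const)).continuousAt)
          (mul_ne_zero hc2 (sub_ne_zero.2 hwa))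
      · exact ((continuous_id.sub continuous_const).continuousAt).mul
          ((Q j).continuousAt)
    have hcb : ContinuousAt (fun w : ℂ => 1/(c2*(w-b)) + (w-b)*(Q m).eval w) w := by
      apply ContinuousAt.add
      · exact continuousAt_const.div
          ((continuous_const.mul (continuous_id.sub continuous_const)).continuousAt)
          (mul_ne_zero hc2 (sub_ne_zero.2 hwb))
      · exact ((continuous_id.sub continuous_const).continuousAt).mul
          ((Q m).continuousAt)
    exact hca.mul hcb
  constructor
  · -- circle integrals
    intro l
    set d1 : ℝ := if z l = a then 1 else dist (z l) a with hd1
    set d2 : ℝ := if z l = b then 1 else dist (z l) b with hd2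
    have hd1pos : 0 < d1 := by
      rw [hd1]; split
      · norm_num
      · exact dist_pos.2 (by assumption)
    have hd2pos : 0 < d2 := by
      rw [hd2]; split
      · norm_num
      · exact dist_pos.2 (by assumption)
    refine ⟨min d1 d2, lt_min hd1pos hd2pos, fun r hr hrlt => ?_⟩
    have hsphere : ∀ θ : ℝ, dist (circleMap (z l) r θ) (z l) = r := fun θ =>
      Metric.mem_sphere.1 (circleMap_mem_sphere (z l) hr.le θ)
    have hne : ∀ (θ : ℝ) (c : ℂ) (d : ℝ), (d = if z l = c then 1 else dist (z l) c) →
        r < d → circleMap (z l) r θ ≠ c := by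
      intro θ c d hd hrd hcontra
      by_cases hlc : z l = c
      · have : dist (circleMap (z l) r θ) (z l) = 0 := by rw [hcontra, hlc, dist_self]
        rw [hsphere θ] at this; exact hr.ne' this
      · rw [if_neg hlc] at hd
        have : dist (z l) c = r := by rw [← hcontra, dist_comm]; exact hsphere θ
        rw [hd, this] at hrd; exact lt_irrefl r hrd
    have hnea : ∀ θ : ℝ, circleMap (z l) r θ ≠ a :=
      fun θ => hne θ a d1 hd1 (lt_of_lt_of_le hrlt (min_le_left _ _))
    have hneb : ∀ θ : ℝ, circleMap (z l) r θ ≠ b :=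
      fun θ => hne θ b d2 hd2 (lt_of_lt_of_le hrlt (min_le_right _ _))
    refine circle_integral_zero F (fun w => R j w * R m w) (z l) r
      (fun θ => hF' _ (hnea θ) (hneb θ)) ?_
    rw [continuous_iff_continuousAt]
    intro θ
    exact (hfc _ (hnea θ) (hneb θ)).comp (continuous_circleMap _ _).continuousAt
  · -- curve integral
    refine closed_curve_integral_zero F (fun w => R j w * R m w) (γ k) (γ' k)
      (hγd k) (hclosed k) (fun t => hF' _ (havoid k t j) (havoid k t m)) ?_
    apply Continuous.mul ?_ (hγc k)
    rw [continuous_iff_continuousAt]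
    intro t
    have hγcont : ContinuousAt (γ k) t := (hγd k t).continuousAt
    exact (hfc _ (havoid k t j) (havoid k t m)).comp hγcont
end

section
/- Suppose Ω is a bounded domain, S : Ω → ℂ ∪ {∞} is meromorphic on Ω with poles exactly at points a₁,…,a_N of orders n₁,…,n_N, continuous up to ∂Ω with S(z) = conj(z) on ∂Ω, and 0 ∉ closure(Ω). If f₁,…,f_N are proper holomorphic maps of Ω onto the unit disc, each continuous on the closure with |f_j| = 1 on ∂Ω, and a_j is a zero of f_j of order 1, then Φ(z) = (∏_j f_j(z)^{n_j}) · S(z)/z extends holomorphically to Ω, is continuous on the closure, and |Φ| = 1 on ∂Ω. -/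
open Set

/-- If `S` is the Schwarz function of a bounded domain `Ω` with `0 ∉ closure Ω`, with poles
exactly at `a j` of orders `n j`, and `f j` are proper holomorphic maps onto the unit disc
(continuous on the closure, unimodular on the boundary) with simple zeros at `a j`, then
`Φ(z) = (∏ j f j z ^ n j) · S z / z` extends holomorphically to `Ω`, is continuous on the
closure, and has unit modulus on the boundary. -/
theorem schwarz_function_proper_quotient
    (Ω : Set ℂ) (hΩo : IsOpen Ω) (hΩc : IsConnected Ω) (hΩb : Bornology.IsBounded Ω)
    (h0 : (0:ℂ) ∉ closure Ω)
    {N : ℕ} (a : Fin N → ℂ) (ha : ∀ j, a j ∈ Ω) (hainj : Function.Injective a)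
    (n : Fin N → ℕ) (hn : ∀ j, 0 < n j)
    (S g : ℂ → ℂ)
    (hg : DifferentiableOn ℂ g Ω) (hg0 : ∀ j, g (a j) ≠ 0)
    (hS : ∀ z ∈ Ω \ Set.range a, S z = g z / ∏ j, (z - a j) ^ (n j))
    (hScont : ContinuousOn S (closure Ω \ Set.range a))
    (hSbd : ∀ z ∈ frontier Ω, S z = starRingEnd ℂ z)
    (f : Fin N → ℂ → ℂ)
    (hfd : ∀ j, DifferentiableOn ℂ (f j) Ω)
    (hfc : ∀ j, ContinuousOn (f j) (closure Ω))
    (hfu : ∀ j, ∀ z ∈ frontier Ω, ‖f j z‖ = 1)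
    (hfz : ∀ j, f j (a j) = 0) (hfs : ∀ j, deriv (f j) (a j) ≠ 0) :
    ∃ Φ : ℂ → ℂ, DifferentiableOn ℂ Φ Ω ∧ ContinuousOn Φ (closure Ω) ∧
      (∀ z ∈ closure Ω \ Set.range a, Φ z = (∏ j, f j z ^ (n j)) * S z / z) ∧
      (∀ z ∈ frontier Ω, ‖Φ z‖ = 1) := by
  classical
  have hne0 : ∀ z ∈ closure Ω, z ≠ 0 := fun z hz h => h0 (h ▸ hz)
  set h : Fin N → ℂ → ℂ := fun j => dslope (f j) (a j) with hhdef
  have hhd : ∀ j, DifferentiableOn ℂ (h j) Ω := fun j =>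
    (Complex.differentiableOn_dslope (hΩo.mem_nhds (ha j))).mpr (hfd j)
  have hhval : ∀ j, ∀ z, z ≠ a j → h j z = f j z / (z - a j) := by
    intro j z hz
    simp [hhdef, dslope_of_ne _ hz, slope, hfz j, div_eq_inv_mul]
  set Ψ : ℂ → ℂ := fun z => g z * (∏ j, h j z ^ n j) / z with hΨdef
  set Φ : ℂ → ℂ := fun z =>
    if z ∈ Set.range a then g z * (∏ j, h j z ^ n j) / z
    else (∏ j, f j z ^ n j) * S z / z with hΦdef
  have hΨd : DifferentiableOn ℂ Ψ Ω := by
    apply DifferentiableOn.div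
    · exact hg.mul (DifferentiableOn.fun_finsetProd (fun j _ => (hhd j).pow _))
    · exact differentiableOn_id
    · exact fun z hz => hne0 z (subset_closure hz)
  have hΦΨ : ∀ z ∈ Ω, Φ z = Ψ z := by
    intro z hz
    by_cases hza : z ∈ Set.range a
    · simp only [hΦdef, hΨdef]; rw [if_pos hza]
    · have hzsub : ∀ j, z - a j ≠ 0 := by
        intro j hj
        exact hza ⟨j, (sub_eq_zero.mp hj).symm⟩
      have hprod : (∏ j, (z - a j) ^ n j) ≠ 0 :=
        Finset.prod_ne_zero_iff.mpr fun j _ => pow_ne_zero _ (hzsub j)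
      have hzne : z ≠ 0 := hne0 z (subset_closure hz)
      simp only [hΦdef, hΨdef, if_neg hza]
      rw [hS z ⟨hz, hza⟩]
      have : (∏ j, h j z ^ n j) = (∏ j, f j z ^ n j) / ∏ j, (z - a j) ^ n j := by
        rw [← Finset.prod_div_distrib]
        refine Finset.prod_congr rfl fun j _ => ?_
        rw [hhval j z (fun e => hzsub j (by rw [e, sub_self])), div_pow]
      rw [this]
      field_simp
  have hΦd : DifferentiableOn ℂ Φ Ω := hΨd.congr hΦΨ
  have hΦeq : ∀ z ∈ closure Ω \ Set.range a, Φ z = (∏ j, f j z ^ n j) * S z / z := by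
    intro z hz
    simp only [hΦdef]; rw [if_neg hz.2]
  have hF : ContinuousOn (fun z => (∏ j, f j z ^ n j) * S z / z) (closure Ω \ Set.range a) := by
    apply ContinuousOn.div
    · exact (continuousOn_finset_prod Finset.univ
        (fun j _ => ((hfc j).mono diff_subset).pow _)).mul hScont
    · exact continuousOn_id
    · exact fun z hz => hne0 z hz.1
  have hΦc : ContinuousOn Φ (closure Ω) := by
    intro x hx
    by_cases hxΩ : x ∈ Ω
    · have : ContinuousAt Φ x := by
        refine (hΨd.continuousOn.continuousAt (hΩo.mem_nhds hxΩ)).congr ?_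
        exact Filter.eventuallyEq_of_mem (hΩo.mem_nhds hxΩ) fun z hz => (hΦΨ z hz).symm
      exact this.continuousWithinAt
    · have hxa : x ∉ Set.range a := fun ⟨j, hj⟩ => hxΩ (hj ▸ ha j)
      have hmem : closure Ω \ Set.range a ∈ nhdsWithin x (closure Ω) := by
        rw [diff_eq]
        exact Filter.inter_mem self_mem_nhdsWithin
          (mem_nhdsWithin_of_mem_nhds
            (((Set.finite_range a).isClosed.isOpen_compl).mem_nhds hxa))
      refine ContinuousWithinAt.mono_of_mem_nhdsWithin ?_ hmem
      exact ((hF x ⟨hx, hxa⟩).congr (fun z hz => hΦeq z hz) (hΦeq x ⟨hx, hxa⟩))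
  refine ⟨Φ, hΦd, hΦc, hΦeq, ?_⟩
  intro z hz
  have hzc : z ∈ closure Ω := frontier_subset_closure hz
  have hzΩ : z ∉ Ω := by
    rw [hΩo.frontier_eq] at hz
    exact hz.2
  have hza : z ∉ Set.range a := fun ⟨j, hj⟩ => hzΩ (hj ▸ ha j)
  have hzne : z ≠ 0 := hne0 z hzc
  rw [hΦeq z ⟨hzc, hza⟩, hSbd z hz]
  rw [norm_div, norm_mul, norm_prod]
  have : ∀ j ∈ Finset.univ, ‖f j z ^ n j‖ = 1 := by
    intro j _
    rw [norm_pow, hfu j z hz, one_pow]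
  rw [Finset.prod_congr rfl this, Finset.prod_const_one, one_mul,
    RCLike.norm_conj, div_self (norm_ne_zero_iff.mpr hzne)]
end
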